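/- arXiv:2404.15975 — 2 statements merged into one kernel-verified Lean document; each statement's English description precedes it below -/
import Mathlib

section
/- Let $n \ge 1$ and $s \in (0,1)$. There exists a constant $c > 0$ depending only on $n$ and $s$ such that for all unit vectors $v_1, v_2 \in \mathbb{S}^{n-1}$, $$|v_1 - v_2| \le c \sup_{x \in B_1} \big| (v_1 \cdot x)_+^s - (v_2 \cdot x)_+^s \big|,$$ where $B_1$ is the closed unit ball in $\mathbb{R}^n$. -/
open scoped RealInnerProductSpace

/-- The `L^∞(B_1)` distance between half-space solutions controls the distance of the
corresponding normal directions. -/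
theorem normal_controlled_by_halfspace_sup (n : ℕ) (hn : 1 ≤ n) (s : ℝ)
    (hs : 0 < s) (hs1 : s < 1) :
    ∃ c : ℝ, 0 < c ∧ ∀ v₁ v₂ : EuclideanSpace ℝ (Fin n), ‖v₁‖ = 1 → ‖v₂‖ = 1 →
      ‖v₁ - v₂‖ ≤ c * ⨆ x : (Metric.closedBall (0 : EuclideanSpace ℝ (Fin n)) 1),
        |(max ⟪v₁, (x : EuclideanSpace ℝ (Fin n))⟫ 0) ^ s
          - (max ⟪v₂, (x : EuclideanSpace ℝ (Fin n))⟫ 0) ^ s| := by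
  refine ⟨2, two_pos, fun v₁ v₂ h₁ h₂ => ?_⟩
  set f : (Metric.closedBall (0 : EuclideanSpace ℝ (Fin n)) 1) → ℝ :=
    fun x => |(max ⟪v₁, (x : EuclideanSpace ℝ (Fin n))⟫ 0) ^ s
          - (max ⟪v₂, (x : EuclideanSpace ℝ (Fin n))⟫ 0) ^ s| with hf
  have hbdd : BddAbove (Set.range f) := by
    refine ⟨1, ?_⟩
    rintro _ ⟨x, rfl⟩
    have hx : ‖(x : EuclideanSpace ℝ (Fin n))‖ ≤ 1 := by
      exact mem_closedBall_zero_iff.mp x.2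
    have key : ∀ v : EuclideanSpace ℝ (Fin n), ‖v‖ = 1 →
        (max ⟪v, (x : EuclideanSpace ℝ (Fin n))⟫ 0) ^ s ∈ Set.Icc (0:ℝ) 1 := by
      intro v hv
      have h0 : (0:ℝ) ≤ max ⟪v, (x : EuclideanSpace ℝ (Fin n))⟫ 0 := le_max_right _ _
      have h1 : max ⟪v, (x : EuclideanSpace ℝ (Fin n))⟫ 0 ≤ 1 := by
        refine max_le ?_ zero_le_one
        calc ⟪v, (x : EuclideanSpace ℝ (Fin n))⟫ ≤ ‖v‖ * ‖(x:EuclideanSpace ℝ (Fin n))‖ :=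
          real_inner_le_norm _ _
        _ ≤ 1 := by rw [hv]; simpa using hx
      exact ⟨Real.rpow_nonneg h0 s, Real.rpow_le_one h0 h1 hs.le⟩
    have k1 := key v₁ h₁; have k2 := key v₂ h₂
    rw [hf, abs_sub_le_iff]
    constructor <;> simp only [Set.mem_Icc] at k1 k2 <;> linarith [k1.1, k1.2, k2.1, k2.2]
  rcases eq_or_ne v₁ v₂ with rfl | hne
  · have hmem : (0:EuclideanSpace ℝ (Fin n)) ∈
        Metric.closedBall (0:EuclideanSpace ℝ (Fin n)) 1 := by simp
    have h0le : (0:ℝ) ≤ ⨆ x, f x :=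
      le_trans (abs_nonneg _) (le_ciSup hbdd ⟨0, hmem⟩)
    simp only [sub_self, norm_zero]
    linarith
  · set δ := ‖v₁ - v₂‖ with hδ
    have hδ0 : 0 < δ := norm_pos_iff.mpr (sub_ne_zero.mpr hne)
    have hδ2 : δ ≤ 2 := by
      have := norm_sub_le v₁ v₂
      rw [h₁, h₂] at this; linarith
    have hip : ⟪v₁, v₂⟫ = 1 - δ^2/2 := by
      have h := @norm_sub_sq_real (EuclideanSpace ℝ (Fin n)) _ _ v₁ v₂
      rw [h₁, h₂] at h
      nlinarith [h]
    set x₀ : EuclideanSpace ℝ (Fin n) := δ⁻¹ • (v₁ - v₂) with hx₀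
    have hx₀mem : x₀ ∈ Metric.closedBall (0:EuclideanSpace ℝ (Fin n)) 1 := by
      rw [Metric.mem_closedBall, dist_zero_right, hx₀, norm_smul, norm_inv,
        Real.norm_eq_abs, abs_of_pos hδ0, ← hδ, inv_mul_cancel₀ hδ0.ne']
    have hin1 : ⟪v₁, x₀⟫ = δ / 2 := by
      rw [hx₀, real_inner_smul_right, inner_sub_right, real_inner_self_eq_norm_sq, h₁, hip]
      field_simp
      ring
    have hin2 : ⟪v₂, x₀⟫ = -(δ / 2) := by
      rw [hx₀, real_inner_smul_right, inner_sub_right, real_inner_self_eq_norm_sq, h₂,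
        real_inner_comm, hip]
      field_simp
      ring
    have hfval : f ⟨x₀, hx₀mem⟩ = (δ/2) ^ s := by
      rw [hf]
      simp only [hin1, hin2]
      rw [max_eq_left (by positivity), max_eq_right (by linarith),
        Real.zero_rpow hs.ne', sub_zero, abs_of_nonneg (Real.rpow_nonneg (by positivity) s)]
    have hkey : δ / 2 ≤ (δ/2) ^ s := by
      have := Real.rpow_le_rpow_of_exponent_ge (half_pos hδ0) (by linarith) hs1.le
      rwa [Real.rpow_one] at this
    have hle := le_ciSup hbdd ⟨x₀, hx₀mem⟩
    rw [hfval] at hle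
    calc ‖v₁ - v₂‖ = 2 * (δ/2) := by rw [← hδ]; ring
    _ ≤ 2 * (δ/2)^s := by linarith
    _ ≤ 2 * ⨆ x, f x := by linarith
end

section
/- Let $u : \mathbb{R}^2 \to \mathbb{R}$ be continuous, and suppose that for every unit vector $\nu \in \mathbb{S}^1$ and every $t \in \mathbb{R}$, either $u(x) \ge u(x + t\nu)$ for all $x \in \mathbb{R}^2$, or $u(x) \le u(x + t\nu)$ for all $x \in \mathbb{R}^2$. Assume further that for each fixed $\nu$, the choice of alternative is consistent in the sense that $u$ is monotone (nondecreasing or nonincreasing) along every line in direction $\nu$, for both coordinate directions $e_1, e_2$. Then $u$ is one-dimensional and monotone: there exist $e \in \mathbb{S}^1$ and a monotone function $\phi : \mathbb{R} \to \mathbb{R}$ such that $u(x) = \phi(x \cdot e)$ for all $x \in \mathbb{R}^2$. -/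
open scoped RealInnerProductSpace

/-- Two-dimensional rigidity: a continuous function on `ℝ²` that is translation-comparable
and monotone along every line in every direction is one-dimensional and monotone:
`u(x) = φ(x·e)` for some unit vector `e` and monotone `φ`. -/
theorem two_dim_translation_rigidity (u : EuclideanSpace ℝ (Fin 2) → ℝ)
    (hu : Continuous u)
    (hcomp : ∀ ν : EuclideanSpace ℝ (Fin 2), ‖ν‖ = 1 → ∀ t : ℝ,
      (∀ x, u (x + t • ν) ≤ u x) ∨ (∀ x, u x ≤ u (x + t • ν)))
    (hmono : ∀ ν : EuclideanSpace ℝ (Fin 2), ‖ν‖ = 1 →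
      (∀ x : EuclideanSpace ℝ (Fin 2), ∀ t₁ t₂ : ℝ, t₁ ≤ t₂ →
        u (x + t₁ • ν) ≤ u (x + t₂ • ν)) ∨
      (∀ x : EuclideanSpace ℝ (Fin 2), ∀ t₁ t₂ : ℝ, t₁ ≤ t₂ →
        u (x + t₂ • ν) ≤ u (x + t₁ • ν))) :
    ∃ e : EuclideanSpace ℝ (Fin 2), ‖e‖ = 1 ∧ ∃ φ : ℝ → ℝ,
      (Monotone φ ∨ Antitone φ) ∧ ∀ x, u x = φ ⟪x, e⟫ := by
  classical
  set A : Set (EuclideanSpace ℝ (Fin 2)) :=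
    {ν | ∀ x, ∀ t₁ t₂ : ℝ, t₁ ≤ t₂ → u (x + t₁ • ν) ≤ u (x + t₂ • ν)} with hA
  set B : Set (EuclideanSpace ℝ (Fin 2)) :=
    {ν | ∀ x, ∀ t₁ t₂ : ℝ, t₁ ≤ t₂ → u (x + t₂ • ν) ≤ u (x + t₁ • ν)} with hB
  have hAclosed : IsClosed A := by
    have : A = ⋂ (x : EuclideanSpace ℝ (Fin 2)), ⋂ (t₁ : ℝ), ⋂ (t₂ : ℝ), ⋂ (_ : t₁ ≤ t₂),
        {ν | u (x + t₁ • ν) ≤ u (x + t₂ • ν)} := by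
      ext ν; simp [hA, Set.mem_iInter]
    rw [this]
    refine isClosed_iInter fun x => isClosed_iInter fun t₁ => isClosed_iInter fun t₂ =>
      isClosed_iInter fun _ => ?_
    exact isClosed_le (hu.comp (continuous_const.add (continuous_id.const_smul t₁)))
      (hu.comp (continuous_const.add (continuous_id.const_smul t₂)))
  have hBclosed : IsClosed B := by
    have : B = ⋂ (x : EuclideanSpace ℝ (Fin 2)), ⋂ (t₁ : ℝ), ⋂ (t₂ : ℝ), ⋂ (_ : t₁ ≤ t₂),
        {ν | u (x + t₂ • ν) ≤ u (x + t₁ • ν)} := by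
      ext ν; simp [hB, Set.mem_iInter]
    rw [this]
    refine isClosed_iInter fun x => isClosed_iInter fun t₁ => isClosed_iInter fun t₂ =>
      isClosed_iInter fun _ => ?_
    exact isClosed_le (hu.comp (continuous_const.add (continuous_id.const_smul t₂)))
      (hu.comp (continuous_const.add (continuous_id.const_smul t₁)))
  have hnegAB : ∀ ν, ν ∈ A → -ν ∈ B := by
    intro ν hν x t₁ t₂ h
    have := hν x (-t₂) (-t₁) (by linarith)
    simpa [smul_neg, neg_smul] using this
  have hnegBA : ∀ ν, ν ∈ B → -ν ∈ A := by
    intro ν hν x t₁ t₂ h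
    have := hν x (-t₂) (-t₁) (by linarith)
    simpa [smul_neg, neg_smul] using this
  -- find a direction in which u is constant
  have key : ∃ ν : EuclideanSpace ℝ (Fin 2), ‖ν‖ = 1 ∧ ν ∈ A ∧ ν ∈ B := by
    by_contra hcon
    push_neg at hcon
    set S : Set (EuclideanSpace ℝ (Fin 2)) := Metric.sphere 0 1 with hS
    have hSnorm : ∀ ν ∈ S, ‖ν‖ = 1 := by
      intro ν hν; simpa [hS, mem_sphere_zero_iff_norm] using hν
    have hSpre : IsPreconnected S := by
      have hrank : 1 < Module.rank ℝ (EuclideanSpace ℝ (Fin 2)) := by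
        have : Module.rank ℝ (EuclideanSpace ℝ (Fin 2)) = 2 := by
          rw [← Module.finrank_eq_rank]
          norm_num [finrank_euclideanSpace_fin]
        rw [this]; norm_num
      exact (isConnected_sphere hrank 0 zero_le_one).isPreconnected
    have hsub : S ⊆ Aᶜ ∪ Bᶜ := by
      intro ν hν
      by_contra h
      simp only [Set.mem_union, Set.mem_compl_iff, not_or, not_not] at h
      exact hcon ν (hSnorm ν hν) h.1 h.2
    -- base points
    obtain ⟨νA, hνAS, hνAA, hνAB⟩ : ∃ ν, ν ∈ S ∧ ν ∈ A ∧ ν ∉ B := by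
      have he1 : ‖(EuclideanSpace.single 0 (1 : ℝ) : EuclideanSpace ℝ (Fin 2))‖ = 1 := by
        simp [EuclideanSpace.norm_single]
      rcases hmono _ he1 with h | h
      · exact ⟨_, by simpa [hS, mem_sphere_zero_iff_norm] using he1, h,
          fun hb => hcon _ he1 h hb⟩
      · refine ⟨-(EuclideanSpace.single 0 (1 : ℝ)), ?_, hnegBA _ h, fun hb => ?_⟩
        · simp [hS, mem_sphere_zero_iff_norm, he1]
        · exact hcon _ (by simp [he1]) (hnegBA _ h) hb
    obtain ⟨νB, hνBS, hνBB, hνBA⟩ : ∃ ν, ν ∈ S ∧ ν ∈ B ∧ ν ∉ A := by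
      refine ⟨-νA, ?_, hnegAB _ hνAA, fun ha => ?_⟩
      · simpa [hS, mem_sphere_zero_iff_norm] using hSnorm νA hνAS
      · exact hcon _ (by simpa [hS, mem_sphere_zero_iff_norm] using hSnorm νA hνAS)
          ha (hnegAB _ hνAA)
    have := hSpre Aᶜ Bᶜ hAclosed.isOpen_compl hBclosed.isOpen_compl hsub
      ⟨νB, hνBS, hνBA⟩ ⟨νA, hνAS, hνAB⟩
    obtain ⟨ν, hνS, hνA, hνB⟩ := this
    rcases hmono ν (hSnorm ν hνS) with h | h
    · exact hνA h
    · exact hνB h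
  obtain ⟨ν, hν1, hνA, hνB⟩ := key
  -- u is constant in direction ν
  have hconst : ∀ x : EuclideanSpace ℝ (Fin 2), ∀ t : ℝ, u (x + t • ν) = u x := by
    intro x t
    rcases le_total t 0 with h | h
    · have h1 := hνA x t 0 h
      have h2 := hνB x t 0 h
      simp only [zero_smul, add_zero] at h1 h2
      exact le_antisymm h1 h2
    · have h1 := hνA x 0 t h
      have h2 := hνB x 0 t h
      simp only [zero_smul, add_zero] at h1 h2
      exact le_antisymm h2 h1
  -- the orthogonal direction
  set a : ℝ := ν 0 with ha
  set b : ℝ := ν 1 with hb2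
  have hab : a ^ 2 + b ^ 2 = 1 := by
    have := EuclideanSpace.norm_eq ν
    rw [hν1] at this
    have h2 : (1 : ℝ) = Real.sqrt (∑ i : Fin 2, ‖ν i‖ ^ 2) := this
    have h3 : ∑ i : Fin 2, ‖ν i‖ ^ 2 = a ^ 2 + b ^ 2 := by
      simp [Fin.sum_univ_two, ha, hb2, sq_abs]
    rw [h3] at h2
    have h4 : Real.sqrt (a ^ 2 + b ^ 2) = 1 := h2.symm
    nlinarith [Real.sq_sqrt (by positivity : (0:ℝ) ≤ a ^ 2 + b ^ 2)]
  set e : EuclideanSpace ℝ (Fin 2) := WithLp.toLp 2 ![-b, a] with he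
  have he0 : e 0 = -b := rfl
  have he1' : e 1 = a := rfl
  have hee : ‖e‖ = 1 := by
    rw [EuclideanSpace.norm_eq]
    have : ∑ i : Fin 2, ‖e i‖ ^ 2 = 1 := by
      simp [Fin.sum_univ_two, he0, he1', sq_abs]
      nlinarith
    rw [this, Real.sqrt_one]
  -- decomposition
  have hdecomp : ∀ x : EuclideanSpace ℝ (Fin 2), x = ⟪x, e⟫ • e + ⟪x, ν⟫ • ν := by
    intro x
    have hie : ⟪x, e⟫ = x 0 * (-b) + x 1 * a := by
      simp [PiLp.inner_apply, Fin.sum_univ_two, he0, he1']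
      ring
    have hiν : ⟪x, ν⟫ = x 0 * a + x 1 * b := by
      simp [PiLp.inner_apply, Fin.sum_univ_two, ha, hb2]
      ring
    ext i
    fin_cases i
    · show x 0 = ⟪x, e⟫ * e 0 + ⟪x, ν⟫ * ν 0
      rw [hie, hiν, he0, ← ha]
      linear_combination (-(x 0)) * hab
    · show x 1 = ⟪x, e⟫ * e 1 + ⟪x, ν⟫ * ν 1
      rw [hie, hiν, he1', ← hb2]
      linear_combination (-(x 1)) * hab
  refine ⟨e, hee, fun s => u (s • e), ?_, ?_⟩
  · rcases hmono e hee with h | h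
    · left
      intro s t hst
      have := h 0 s t hst
      simpa using this
    · right
      intro s t hst
      have := h 0 s t hst
      simpa using this
  · intro x
    conv_lhs => rw [hdecomp x]
    exact hconst (⟪x, e⟫ • e) ⟪x, ν⟫
end
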